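/- Fix real numbers q > 1, y ∈ ℝ, and ρ ∈ ℝ such that ρ² ∉ {q^{−n} : n = 0, 1, 2, …} ∪ {0}. Then there is no probability measure μ on ℝ with finite moments of all orders satisfying ∫ H_n(x|q) dμ(x) = ρ^n·H_n(y|q) for all n ≥ 1. -/

import Mathlib

open MeasureTheory Finset

noncomputable section

/-- The `q`-integer `[n]_q = 1 + q + ⋯ + q^{n-1}`. -/
def qInt (q : ℝ) (n : ℕ) : ℝ := ∑ i ∈ Finset.range n, q ^ i

/-- The (renormalized) continuous `q`-Hermite polynomials, as functions:
`H_{-1} = 0`, `H_0 = 1`, `H_{n+1}(x) = x H_n(x) - [n]_q H_{n-1}(x)`. -/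
def qHermite (q : ℝ) : ℕ → ℝ → ℝ
  | 0 => fun _ => 1
  | 1 => fun x => x
  | n + 2 => fun x => x * qHermite q (n + 1) x - qInt q (n + 1) * qHermite q n x

namespace NoSolAux

open Polynomial

lemma qInt_zero (q : ℝ) : qInt q 0 = 0 := by simp [qInt]

lemma qInt_one (q : ℝ) : qInt q 1 = 1 := by simp [qInt]

lemma qInt_add (q : ℝ) (a b : ℕ) : qInt q (a + b) = qInt q a + q ^ a * qInt q b := by
  simp only [qInt, Finset.sum_range_add, Finset.mul_sum, pow_add]

lemma qInt_pos {q : ℝ} (hq : 1 < q) (n : ℕ) : 0 < qInt q (n + 1) :=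
  Finset.sum_pos (fun i _ => pow_pos (by linarith) i) Finset.nonempty_range_add_one

/-- q-Hermite polynomials as `Polynomial ℝ`. -/
def HP (q : ℝ) : ℕ → Polynomial ℝ
  | 0 => 1
  | 1 => X
  | n + 2 => X * HP q (n + 1) - C (qInt q (n + 1)) * HP q n

/-- Al-Salam–Chihara-type polynomials. -/
def AC (q ρ y : ℝ) : ℕ → Polynomial ℝ
  | 0 => 1
  | 1 => X - C (ρ * y)
  | n + 2 => (X - C (ρ * q ^ (n + 1) * y)) * AC q ρ y (n + 1)
      - C (qInt q (n + 1) * (1 - ρ ^ 2 * q ^ n)) * AC q ρ y n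

lemma eval_HP (q x : ℝ) : ∀ n, (HP q n).eval x = qHermite q n x
  | 0 => by simp [HP, qHermite]
  | 1 => by simp [HP, qHermite]
  | n + 2 => by
      simp [HP, qHermite, eval_HP q x (n + 1), eval_HP q x n]

lemma X_mul_HP (q : ℝ) : ∀ m, X * HP q m = HP q (m + 1) + C (qInt q m) * HP q (m - 1)
  | 0 => by simp [HP, qInt_zero]
  | m + 1 => by
      have h : HP q (m + 2) = X * HP q (m + 1) - C (qInt q (m + 1)) * HP q m := rfl
      rw [h]; ring_nf; simp

def Gp (q : ℝ) (a b : ℕ) : ℝ := ∏ k ∈ Finset.Ico a b, qInt q (k + 1)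

def Cp (q ρ : ℝ) (n : ℕ) : ℝ := ∏ j ∈ Finset.range n, (1 - ρ ^ 2 * q ^ j)

lemma Gp_self (q : ℝ) (a : ℕ) : Gp q a a = 1 := by simp [Gp]

lemma Gp_top (q : ℝ) {a b : ℕ} (h : a ≤ b) : Gp q a (b + 1) = Gp q a b * qInt q (b + 1) :=
  Finset.prod_Ico_succ_top h _

lemma Gp_bot (q : ℝ) {a b : ℕ} (h : a < b) : Gp q a b = qInt q (a + 1) * Gp q (a + 1) b :=
  Finset.prod_eq_prod_Ico_succ_bot h _

lemma Cp_succ (q ρ : ℝ) (n : ℕ) : Cp q ρ (n + 1) = Cp q ρ n * (1 - ρ ^ 2 * q ^ n) :=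
  Finset.prod_range_succ _ _


lemma key (q ρ y : ℝ) (L : Polynomial ℝ →ₗ[ℝ] ℝ)
    (hLH : ∀ m, L (HP q m) = ρ ^ m * qHermite q m y) :
    ∀ n m, L (HP q m * AC q ρ y n) =
      if m < n then 0
      else ρ ^ (m - n) * qHermite q (m - n) y * Gp q (m - n) m * Cp q ρ n := by
  intro n
  induction n using Nat.twoStepInduction with
  | zero =>
      intro m
      rw [if_neg (Nat.not_lt_zero m)]
      show L (HP q m * 1) = _
      rw [mul_one, hLH]
      simp [Gp_self, Cp]
  | one =>
      intro m
      have hpoly : HP q m * AC q ρ y 1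
          = HP q (m + 1) + (qInt q m) • HP q (m - 1) - (ρ * y) • HP q m := by
        have hx := X_mul_HP q m
        show HP q m * (X - C (ρ * y)) = _
        rw [smul_eq_C_mul, smul_eq_C_mul]
        linear_combination hx
      rw [hpoly, map_sub, map_add, LinearMap.map_smul, LinearMap.map_smul, smul_eq_mul, smul_eq_mul,
        hLH, hLH, hLH]
      match m with
      | 0 =>
          rw [if_pos (by omega)]
          have h0 : qHermite q 0 y = 1 := rfl
          have h1 : qHermite q 1 y = y := rfl
          rw [qInt_zero, h1]
          show ρ ^ 1 * y + 0 * (ρ ^ (0 - 1) * qHermite q (0 - 1) y) - ρ * y * (ρ ^ 0 * qHermite q 0 y) = 0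
          rw [h0]; ring
      | t + 1 =>
          rw [if_neg (by omega)]
          have h8 : qHermite q (t + 2) y
              = y * qHermite q (t + 1) y - qInt q (t + 1) * qHermite q t y := rfl
          have hg : Gp q t (t + 1) = qInt q (t + 1) := by
            rw [Gp_top q le_rfl, Gp_self, one_mul]
          simp only [Nat.add_sub_cancel]
          rw [show t + 1 + 1 = t + 2 from rfl, h8, hg, Cp_succ]
          simp only [Cp, Finset.range_zero, Finset.prod_empty, pow_zero, one_mul]
          ring
  | more n ih1 ih2 =>
      intro m
      have hpoly : HP q m * AC q ρ y (n + 2)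
          = HP q (m + 1) * AC q ρ y (n + 1)
            + (qInt q m) • (HP q (m - 1) * AC q ρ y (n + 1))
            - (ρ * q ^ (n + 1) * y) • (HP q m * AC q ρ y (n + 1))
            - (qInt q (n + 1) * (1 - ρ ^ 2 * q ^ n)) • (HP q m * AC q ρ y n) := by
        have hx := X_mul_HP q m
        show HP q m * ((X - C (ρ * q ^ (n + 1) * y)) * AC q ρ y (n + 1)
            - C (qInt q (n + 1) * (1 - ρ ^ 2 * q ^ n)) * AC q ρ y n) = _
        rw [smul_eq_C_mul, smul_eq_C_mul, smul_eq_C_mul]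
        linear_combination AC q ρ y (n + 1) * hx
      rw [hpoly, map_sub, map_sub, map_add, LinearMap.map_smul, LinearMap.map_smul, LinearMap.map_smul,
        smul_eq_mul, smul_eq_mul, smul_eq_mul, ih2, ih2, ih2, ih1]
      rcases Nat.lt_or_ge m (n + 2) with hm | hm
      · rw [if_pos hm]
        rcases Nat.lt_or_ge m n with hmn | hmn
        · -- m < n : every term vanishes
          rw [if_pos (by omega), if_pos (by omega), if_pos (by omega), if_pos hmn]
          ring
        · rcases (by omega : m = n ∨ m = n + 1) with h | h
          · subst h
            rw [if_neg (by omega), if_pos (by omega), if_pos (by omega), if_neg (by omega)]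
            have e5 : Cp q ρ (m + 1) = Cp q ρ m * (1 - ρ ^ 2 * q ^ m) := Cp_succ q ρ m
            have e1 : Gp q 0 (m + 1) = Gp q 0 m * qInt q (m + 1) := Gp_top q (Nat.zero_le m)
            have h0 : qHermite q 0 y = 1 := rfl
            simp only [Nat.sub_self, Nat.add_sub_cancel, pow_zero, one_mul, h0, e5, e1]
            ring
          · subst h
            rw [if_neg (by omega), if_pos (by omega), if_neg (by omega), if_neg (by omega)]
            have e5 : Cp q ρ (n + 1) = Cp q ρ n * (1 - ρ ^ 2 * q ^ n) := Cp_succ q ρ n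
            have eg1 : Gp q 1 (n + 2) = Gp q 1 (n + 1) * qInt q (n + 2) := Gp_top q (by omega)
            have eg0 : Gp q 0 (n + 1) = qInt q 1 * Gp q 1 (n + 1) := Gp_bot q (by omega)
            have e7 : qInt q (n + 2) = qInt q (n + 1) + q ^ (n + 1) * qInt q 1 := by
              have := qInt_add q (n + 1) 1
              simpa using this
            have h0 : qHermite q 0 y = 1 := rfl
            have h1 : qHermite q 1 y = y := rfl
            simp only [show n + 1 + 1 - (n + 1) = 1 from by omega,
              show n + 1 - (n + 1) = 0 from by omega, show n + 1 - n = 1 from by omega,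
              pow_one, pow_zero, one_mul, h0, h1, e5, eg1, eg0, e7, qInt_one]
            ring
      · rw [if_neg (by omega)]
        obtain ⟨s, rfl⟩ : ∃ s, m = n + 2 + s := ⟨m - (n + 2), by omega⟩
        rw [if_neg (by omega), if_neg (by omega), if_neg (by omega), if_neg (by omega)]
        have e1 : Gp q (s + 2) (n + 2 + s + 1) = Gp q (s + 2) (n + 2 + s) * qInt q (n + 2 + s + 1) :=
          Gp_top q (by omega)
        have e3 : Gp q (s + 1) (n + 2 + s) = qInt q (s + 2) * Gp q (s + 2) (n + 2 + s) :=
          Gp_bot q (by omega)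
        have e4 : Gp q s (n + 2 + s) = qInt q (s + 1) * (qInt q (s + 2) * Gp q (s + 2) (n + 2 + s)) := by
          rw [Gp_bot q (by omega : s < n + 2 + s), ← e3]
        have e2 : Gp q s (n + 2 + s - 1) * qInt q (n + 2 + s)
            = qInt q (s + 1) * (qInt q (s + 2) * Gp q (s + 2) (n + 2 + s)) := by
          rw [← e4, show n + 2 + s = (n + 2 + s - 1) + 1 from by omega]
          exact (Gp_top q (by omega)).symm
        have e5 : Cp q ρ (n + 2) = Cp q ρ (n + 1) * (1 - ρ ^ 2 * q ^ (n + 1)) := Cp_succ q ρ (n + 1)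
        have e6 : Cp q ρ (n + 1) = Cp q ρ n * (1 - ρ ^ 2 * q ^ n) := Cp_succ q ρ n
        have e7 : qInt q (n + 2 + s + 1) = qInt q (n + 1) + q ^ (n + 1) * qInt q (s + 2) := by
          rw [show n + 2 + s + 1 = (n + 1) + (s + 2) from by omega]
          exact qInt_add q (n + 1) (s + 2)
        have e8 : qHermite q (s + 2) y
            = y * qHermite q (s + 1) y - qInt q (s + 1) * qHermite q s y := rfl
        have d1 : n + 2 + s + 1 - (n + 1) = s + 2 := by omega
        have d2 : n + 2 + s - 1 - (n + 1) = s := by omega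
        have d3 : n + 2 + s - (n + 1) = s + 1 := by omega
        have d4 : n + 2 + s - n = s + 2 := by omega
        have d5 : n + 2 + s - (n + 2) = s := by omega
        rw [d1, d2, d3, d4, d5, e1, e3, e5, e6, e7, e8]
        rw [show Gp q s (n + 2 + s) = _ from e4]
        linear_combination (ρ ^ s * qHermite q s y * (Cp q ρ n * (1 - ρ ^ 2 * q ^ n))) * e2

def Vsp (q : ℝ) (k : ℕ) : Submodule ℝ (Polynomial ℝ) :=
  Submodule.span ℝ {A | ∃ m < k, A = HP q m}

lemma HP_mem_Vsp (q : ℝ) {m k : ℕ} (h : m < k) : HP q m ∈ Vsp q k :=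
  Submodule.subset_span ⟨m, h, rfl⟩

lemma Vsp_mono (q : ℝ) {a b : ℕ} (h : a ≤ b) : Vsp q a ≤ Vsp q b :=
  Submodule.span_mono (fun A hA => by obtain ⟨m, hm, rfl⟩ := hA; exact ⟨m, by omega, rfl⟩)

lemma X_mul_mem_Vsp (q : ℝ) {k : ℕ} {A : Polynomial ℝ} (hA : A ∈ Vsp q k) :
    X * A ∈ Vsp q (k + 1) := by
  rw [Vsp] at hA
  induction hA using Submodule.span_induction with
  | mem B hB =>
      obtain ⟨m, hm, rfl⟩ := hB
      rw [X_mul_HP]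
      refine add_mem (HP_mem_Vsp q (by omega)) ?_
      rw [← smul_eq_C_mul]
      exact Submodule.smul_mem _ _ (HP_mem_Vsp q (by omega))
  | zero => rw [mul_zero]; exact zero_mem _
  | add B D hB hD ihB ihD => rw [mul_add]; exact add_mem ihB ihD
  | smul a B hB ih => rw [mul_smul_comm]; exact Submodule.smul_mem _ _ ih

lemma AC_sub_HP_mem_Vsp (q ρ y : ℝ) : ∀ n, AC q ρ y n - HP q n ∈ Vsp q n := by
  intro n
  induction n using Nat.twoStepInduction with
  | zero => simp only [AC, HP, sub_self]; exact zero_mem _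
  | one =>
      have h : AC q ρ y 1 - HP q 1 = (-(ρ * y)) • HP q 0 := by
        simp only [AC, HP, smul_eq_C_mul]
        push_cast [map_neg]
        ring
      rw [h]
      exact Submodule.smul_mem _ _ (HP_mem_Vsp q (by omega))
  | more n ih1 ih2 =>
      have heq : AC q ρ y (n + 2) - HP q (n + 2)
          = X * (AC q ρ y (n + 1) - HP q (n + 1))
            + ((-(ρ * q ^ (n + 1) * y)) • AC q ρ y (n + 1)
              + ((-(qInt q (n + 1) * (1 - ρ ^ 2 * q ^ n))) • AC q ρ y n
                + (qInt q (n + 1)) • HP q n)) := by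
        have hAC : AC q ρ y (n + 2) = (X - C (ρ * q ^ (n + 1) * y)) * AC q ρ y (n + 1)
            - C (qInt q (n + 1) * (1 - ρ ^ 2 * q ^ n)) * AC q ρ y n := rfl
        have hHP : HP q (n + 2) = X * HP q (n + 1) - C (qInt q (n + 1)) * HP q n := rfl
        rw [hAC, hHP, smul_eq_C_mul, smul_eq_C_mul, smul_eq_C_mul, map_neg, map_neg]
        ring
      rw [heq]
      have hAC1 : AC q ρ y (n + 1) ∈ Vsp q (n + 2) := by
        have : AC q ρ y (n + 1) = (AC q ρ y (n + 1) - HP q (n + 1)) + HP q (n + 1) := by ring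
        rw [this]
        exact add_mem (Vsp_mono q (by omega) ih2) (HP_mem_Vsp q (by omega))
      have hAC0 : AC q ρ y n ∈ Vsp q (n + 2) := by
        have : AC q ρ y n = (AC q ρ y n - HP q n) + HP q n := by ring
        rw [this]
        exact add_mem (Vsp_mono q (by omega) ih1) (HP_mem_Vsp q (by omega))
      exact add_mem (X_mul_mem_Vsp q ih2)
        (add_mem (Submodule.smul_mem _ _ hAC1)
          (add_mem (Submodule.smul_mem _ _ hAC0)
            (Submodule.smul_mem _ _ (HP_mem_Vsp q (by omega)))))

end NoSolAux

open NoSolAux Polynomial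

/-- Corollary (i): for `q > 1`, if `ρ² ∉ {1, 1/q, 1/q², …} ∪ {0}`, then there is no
probability measure `μ` on `ℝ` with finite moments of all orders satisfying
`∫ H_n(x|q) dμ(x) = ρ^n H_n(y|q)` for all `n ≥ 1`. -/
theorem no_solution_of_not_mem_Rq (q y ρ : ℝ) (hq : 1 < q)
    (hρ : ρ ^ 2 ∉ insert (0 : ℝ) (Set.range fun n : ℕ => (q ^ n)⁻¹)) :
    ¬ ∃ μ : Measure ℝ, IsProbabilityMeasure μ ∧
        (∀ n : ℕ, Integrable (fun x => x ^ n) μ) ∧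
        (∀ n : ℕ, 1 ≤ n → ∫ x, qHermite q n x ∂μ = ρ ^ n * qHermite q n y) := by
  rintro ⟨μ, hprob, hint, hH⟩
  have hq0 : (0 : ℝ) < q := by linarith
  have hρ0 : ρ ^ 2 ≠ 0 := fun h => hρ (by simp [h])
  have hρpos : 0 < ρ ^ 2 := lt_of_le_of_ne (sq_nonneg ρ) (Ne.symm hρ0)
  have hρn : ∀ n : ℕ, ρ ^ 2 * q ^ n ≠ 1 := by
    intro n h
    exact hρ (Set.mem_insert_iff.mpr (Or.inr ⟨n, ((eq_inv_of_mul_eq_one_left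
      (by linarith [h] : ρ ^ 2 * q ^ n = 1))).symm⟩))
  -- every polynomial is integrable
  have hInt : ∀ A : Polynomial ℝ, Integrable (fun x => A.eval x) μ := by
    intro A
    induction A using Polynomial.induction_on' with
    | add p r hp hr => simpa [eval_add] using hp.fun_add hr
    | monomial n a => simpa [eval_monomial] using (hint n).const_mul a
  -- the moment functional
  let L : Polynomial ℝ →ₗ[ℝ] ℝ :=
    { toFun := fun A => ∫ x, A.eval x ∂μ
      map_add' := fun A B => by
        simp only [eval_add]
        exact integral_add (hInt A) (hInt B)
      map_smul' := fun c A => by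
        simp only [eval_smul, smul_eq_mul, RingHom.id_apply]
        exact integral_const_mul c _ }
  have Lapp : ∀ A : Polynomial ℝ, L A = ∫ x, A.eval x ∂μ := fun _ => rfl
  have hLH : ∀ m, L (HP q m) = ρ ^ m * qHermite q m y := by
    intro m
    match m with
    | 0 =>
        rw [Lapp]
        have h0 : qHermite q 0 y = 1 := rfl
        simp [HP, h0]
    | m + 1 =>
        rw [Lapp]
        simp only [eval_HP]
        exact hH (m + 1) (by omega)
  have hkey := key q ρ y L hLH
  have Lzero : ∀ (k : ℕ) (A : Polynomial ℝ), A ∈ Vsp q k → L (A * AC q ρ y k) = 0 := by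
    intro k A hA
    rw [Vsp] at hA
    induction hA using Submodule.span_induction with
    | mem B hB =>
        obtain ⟨m, hm, rfl⟩ := hB
        rw [hkey k m, if_pos hm]
    | zero => rw [zero_mul, map_zero]
    | add B D hB hD ihB ihD => rw [add_mul, map_add, ihB, ihD, add_zero]
    | smul a B hB ih => rw [smul_mul_assoc, LinearMap.map_smul, ih, smul_zero]
  have hval : ∀ n, L (AC q ρ y n * AC q ρ y n) = Gp q 0 n * Cp q ρ n := by
    intro n
    have h1 : AC q ρ y n * AC q ρ y n
        = (AC q ρ y n - HP q n) * AC q ρ y n + HP q n * AC q ρ y n := by ring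
    rw [h1, map_add, Lzero n _ (AC_sub_HP_mem_Vsp q ρ y n), hkey n n, if_neg (lt_irrefl n),
      zero_add, Nat.sub_self]
    have h0 : qHermite q 0 y = 1 := rfl
    rw [h0]
    ring
  have hnonneg : ∀ n, 0 ≤ L (AC q ρ y n * AC q ρ y n) := by
    intro n
    rw [Lapp]
    have : ∀ x : ℝ, (AC q ρ y n * AC q ρ y n).eval x = ((AC q ρ y n).eval x) ^ 2 := by
      intro x; rw [eval_mul]; ring
    simp only [this]
    exact integral_nonneg fun x => sq_nonneg _
  -- choose n with Cp q ρ n < 0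
  obtain ⟨N, hN⟩ := pow_unbounded_of_one_lt ((ρ ^ 2)⁻¹) hq
  have hNneg : 1 - ρ ^ 2 * q ^ N < 0 := by
    have h1 : ρ ^ 2 * (ρ ^ 2)⁻¹ = 1 := mul_inv_cancel₀ hρ0
    nlinarith [mul_lt_mul_of_pos_left hN hρpos]
  have hfne : ∀ j : ℕ, 1 - ρ ^ 2 * q ^ j ≠ 0 := fun j h => hρn j (by linarith)
  have hCne : Cp q ρ (N + 1) ≠ 0 :=
    Finset.prod_ne_zero_iff.mpr fun j _ => hfne j
  have hqN1 : 1 - ρ ^ 2 * q ^ (N + 1) < 0 := by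
    have : q ^ (N + 1) = q ^ N * q := pow_succ q N
    nlinarith [pow_pos hq0 N]
  obtain ⟨n, hCneg⟩ : ∃ n, Cp q ρ n < 0 := by
    rcases lt_or_gt_of_ne hCne with h | h
    · exact ⟨N + 1, h⟩
    · refine ⟨N + 2, ?_⟩
      rw [show N + 2 = (N + 1) + 1 from rfl, Cp_succ]
      nlinarith
  have hGpos : 0 < Gp q 0 n :=
    Finset.prod_pos fun k _ => qInt_pos hq k
  have := hnonneg n
  rw [hval n] at this
  nlinarith
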